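/- Let 𝒫 be a finite set of properties, let X = ℝⁿ or X = {x ∈ ℝⁿ : ∀ i, x_i ≤ z} for some z ∈ ℝ, and for each p ∈ 𝒫 let γ_p : ℝⁿ → ℝ be a scoring function. Suppose the strict epistemic pooling principle holds for componentwise max-pooling for all e, f ∈ X (for every p ∈ 𝒫, γ_p(max(e,f)) > 0 ↔ γ_p(e) > 0 ∨ γ_p(f) > 0), and suppose every epistemic state is realized: for every subset Q ⊆ 𝒫 there exists e ∈ X with Γ(e) = Q, where Γ(e) = {p ∈ 𝒫 : γ_p(e) > 0}. Then n ≥ |𝒫|. -/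
import Mathlib


/-- If the strict epistemic pooling principle holds for max-pooling on
X = ℝⁿ or X = {x : ∀ i, x i ≤ z} for a finite set of properties 𝒫, and every
epistemic state Q ⊆ 𝒫 is realized by some embedding in X, then n ≥ |𝒫|. -/
theorem max_pooling_dimension_bound (n : ℕ) (P : Type*) [Fintype P]
    (X : Set (Fin n → ℝ))
    (hX : X = Set.univ ∨ ∃ z : ℝ, X = {x : Fin n → ℝ | ∀ i, x i ≤ z})
    (γ : P → (Fin n → ℝ) → ℝ)
    (hpool : ∀ e ∈ X, ∀ f ∈ X, ∀ p : P,
      γ p (fun i => max (e i) (f i)) > 0 ↔ (γ p e > 0 ∨ γ p f > 0))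
    (hreal : ∀ Q : Set P, ∃ e ∈ X, ∀ p : P, γ p e > 0 ↔ p ∈ Q) :
    Fintype.card P ≤ n := by
  classical
  have hclos : ∀ e ∈ X, ∀ f ∈ X, (fun i => max (e i) (f i)) ∈ X := by
    rcases hX with h | ⟨z, h⟩
    · subst h; intro e _ f _; trivial
    · subst h; intro e he f hf i; exact max_le (he i) (hf i)
  choose E hEX hEγ using hreal
  have key : ∀ S : Finset P, ∃ g ∈ X, (∀ q, γ q g > 0 ↔ q ∈ S) ∧
      ∀ q ∈ S, ∀ i, E {q} i ≤ g i := by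
    intro S
    induction S using Finset.induction_on with
    | empty =>
        refine ⟨E ∅, hEX ∅, fun q => by simpa using hEγ ∅ q, by simp⟩
    | @insert p S hpS ih =>
        obtain ⟨g, hgX, hgΓ, hgle⟩ := ih
        refine ⟨fun i => max (E {p} i) (g i),
          hclos _ (hEX {p}) _ hgX, fun q => ?_, fun q hq i => ?_⟩
        · rw [hpool _ (hEX {p}) _ hgX q, hEγ {p} q, hgΓ q]
          simp [Set.mem_singleton_iff]
        · rcases Finset.mem_insert.mp hq with rfl | hq
          · exact le_max_left _ _
          · exact le_trans (hgle q hq i) (le_max_right _ _)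
  have hmain : ∀ p : P, ∃ i : Fin n,
      ∀ q : P, q ≠ p → E {q} i < E {p} i := by
    intro p
    obtain ⟨g, hgX, hgΓ, hgle⟩ := key (Finset.univ.erase p)
    by_cases h : ∀ i, E {p} i ≤ g i
    · exfalso
      have heq : (fun i => max (E {p} i) (g i)) = g := by
        funext i; exact max_eq_right (h i)
      have hpE : γ p (E {p}) > 0 := by rw [hEγ {p} p]; exact rfl
      have : γ p g > 0 := by
        rw [← heq]
        exact (hpool _ (hEX {p}) _ hgX p).mpr (Or.inl hpE)
      have := (hgΓ p).mp this
      simp at this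
    · push_neg at h
      obtain ⟨i, hi⟩ := h
      refine ⟨i, fun q hq => lt_of_le_of_lt ?_ hi⟩
      exact hgle q (Finset.mem_erase.mpr ⟨hq, Finset.mem_univ q⟩) i
  choose ι hι using hmain
  have hinj : Function.Injective ι := by
    intro p q hpq
    by_contra hne
    have h1 := hι p q (fun h => hne h.symm)
    have h2 := hι q p hne
    rw [hpq] at h1
    exact absurd (h1.trans h2) (lt_irrefl _)
  simpa using Fintype.card_le_of_injective ι hinj
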